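/- For each product-basis ground state b ∈ ker H̃_{C_m} of the reference box-on-a-stick Hamiltonian, there exists a unique vector (ν_1,…,ν_n) ∈ {0,1}^n such that b ∈ P(ν_1,…,ν_n), where P(ν_1,…,ν_n) is the joint eigenspace of the particle number operators N_1,…,N_n with eigenvalues ν_1,…,ν_n. In particular, each species occurs at most once in any ground state, and the ground states are labeled by the subsets M ⊆ {1,…,n} of species present. -/
import Mathlib


open scoped BigOperators ComplexOrder Matrix

namespace PVBS

/-- The standard basis vector `|a ⊗ b⟩` of `ℂ^{n+1} ⊗ ℂ^{n+1}`
(realized as functions on `Fin (n+1) × Fin (n+1)`). -/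
def ketPair {n : ℕ} (a b : Fin (n + 1)) : Fin (n + 1) × Fin (n + 1) → ℂ :=
  fun p => if p = (a, b) then 1 else 0

/-- The orthogonal projection onto the span of the vector `v` (interpreted as `0` if `v = 0`). -/
noncomputable def projOnto {P : Type*} [Fintype P] (v : P → ℂ) : Matrix P P ℂ :=
  ((∑ p, Complex.normSq (v p) : ℝ) : ℂ)⁻¹ • Matrix.of fun a b => v a * (starRingEnd ℂ) (v b)

/-- The vector `φ_i = |0 ⊗ i⟩ − λ_i |i ⊗ 0⟩` (the species `1 ≤ i ≤ n` is encoded as `i : Fin n`,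
with corresponding basis element `i.succ : Fin (n+1)`). -/
def phiA {n : ℕ} (lam : ℝ) (i : Fin n) : Fin (n + 1) × Fin (n + 1) → ℂ :=
  fun p => ketPair 0 i.succ p - (lam : ℂ) * ketPair i.succ 0 p

/-- The vector `φ_{ij} = λ_i |i ⊗ j⟩ − λ_j |j ⊗ i⟩` for `i < j`. -/
def phiB {n : ℕ} (lami lamj : ℝ) (i j : Fin n) : Fin (n + 1) × Fin (n + 1) → ℂ :=
  fun p => (lami : ℂ) * ketPair i.succ j.succ p - (lamj : ℂ) * ketPair j.succ i.succ p

/-- The vector `φ_{ii} = |i ⊗ i⟩`. -/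
def phiC {n : ℕ} (i : Fin n) : Fin (n + 1) × Fin (n + 1) → ℂ := ketPair i.succ i.succ

/-- The local PVBS interaction `h^{(k)}` in a fixed direction `k`, built from the anisotropy
parameters `lam i = λ_{i+1}^{(k)}`: the sum of the orthogonal projections onto the normalized
versions of the vectors `φ_i` (for `1 ≤ i ≤ n`) and `φ_{ij}` (for `1 ≤ i ≤ j ≤ n`). -/
noncomputable def hloc {n : ℕ} (lam : Fin n → ℝ) :
    Matrix (Fin (n + 1) × Fin (n + 1)) (Fin (n + 1) × Fin (n + 1)) ℂ :=
  (∑ i, projOnto (phiA (lam i) i)) +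
    ∑ i, ∑ j,
      if i < j then projOnto (phiB (lam i) (lam j) i j)
      else if i = j then projOnto (phiC i) else 0

/-- The reference interaction `h̃ = Σ_{i=1}^n |0⊗i⟩⟨0⊗i| + Σ_{1≤i≤j≤n} |i⊗j⟩⟨i⊗j|`
(the `δ = 0` model). -/
noncomputable def htilde (n : ℕ) :
    Matrix (Fin (n + 1) × Fin (n + 1)) (Fin (n + 1) × Fin (n + 1)) ℂ :=
  (∑ i : Fin n, projOnto (ketPair 0 i.succ)) +
    ∑ i : Fin n, ∑ j : Fin n, if i ≤ j then projOnto (ketPair i.succ j.succ) else 0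

/-- The embedding of a two-site operator `h2` at the ordered pair of sites `(x, y)` of `V`,
acting as the identity on all other sites. -/
def embed {n : ℕ} {V : Type*} [Fintype V] [DecidableEq V] (x y : V)
    (h2 : Matrix (Fin (n + 1) × Fin (n + 1)) (Fin (n + 1) × Fin (n + 1)) ℂ) :
    Matrix (V → Fin (n + 1)) (V → Fin (n + 1)) ℂ :=
  Matrix.of fun σ τ =>
    if ∀ z, z ≠ x → z ≠ y → σ z = τ z then h2 (σ x, σ y) (τ x, τ y) else 0

/-- The spectral gap of a matrix: the smallest positive (real) element of its spectrum
(by convention `sInf ∅ = 0` if there is none). -/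
noncomputable def gap {I : Type*} [Fintype I] [DecidableEq I] (M : Matrix I I ℂ) : ℝ :=
  sInf {γ : ℝ | 0 < γ ∧ (γ : ℂ) ∈ spectrum ℂ M}

/-! ### The periodic box `Λ_L = (ZMod N)^d`, `N = 2L`. -/

/-- The neighbor `x + e_k` of the site `x` on the torus `(ZMod N)^d`. -/
def nbrT {d N : ℕ} (x : Fin d → ZMod N) (k : Fin d) : Fin d → ZMod N :=
  fun j => if j = k then x j + 1 else x j

/-- The interaction term `h_e = h^{(k)}_{x, x+e_k}` attached to the oriented edge
`e = (x, k)` of the torus. -/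
noncomputable def hedge {n d N : ℕ} [NeZero N] (lam : Fin n → Fin d → ℝ)
    (e : (Fin d → ZMod N) × Fin d) :
    Matrix ((Fin d → ZMod N) → Fin (n + 1)) ((Fin d → ZMod N) → Fin (n + 1)) ℂ :=
  embed e.1 (nbrT e.1 e.2) (hloc fun i => lam i e.2)

/-- The PVBS Hamiltonian `H_L = Σ_{x ∈ Λ_L} Σ_{k=1}^d h^{(k)}_{x,x+e_k}` on the periodic
box `Λ_L = (ZMod N)^d` with `N = 2L`. -/
noncomputable def HL (n d N : ℕ) [NeZero N] (lam : Fin n → Fin d → ℝ) :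
    Matrix ((Fin d → ZMod N) → Fin (n + 1)) ((Fin d → ZMod N) → Fin (n + 1)) ℂ :=
  ∑ e : (Fin d → ZMod N) × Fin d, hedge lam e

/-- The (unordered) endpoints of the oriented torus edge `e = (x, k)`. -/
def epT {d N : ℕ} (e : (Fin d → ZMod N) × Fin d) : Finset (Fin d → ZMod N) :=
  {e.1, nbrT e.1 e.2}

/-- `Q = Σ_{e ∼ e'} {h_e, h_{e'}}`: the sum over (unordered) pairs of torus edges sharing
exactly one vertex of the anticommutator `{h_e, h_{e'}}`, written as a sum of the products
`h_e * h_{e'}` over ordered pairs. -/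
noncomputable def QL (n d N : ℕ) [NeZero N] (lam : Fin n → Fin d → ℝ) :
    Matrix ((Fin d → ZMod N) → Fin (n + 1)) ((Fin d → ZMod N) → Fin (n + 1)) ℂ :=
  ∑ e : (Fin d → ZMod N) × Fin d, ∑ e' : (Fin d → ZMod N) × Fin d,
    if (epT e ∩ epT e').card = 1 then hedge lam e * hedge lam e' else 0

/-- `R = Σ_{e ≁ e'} {h_e, h_{e'}}`: the sum over (unordered) pairs of torus edges sharing
no vertex of the anticommutator `{h_e, h_{e'}}`, written as a sum of the products
`h_e * h_{e'}` over ordered pairs. -/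
noncomputable def RL (n d N : ℕ) [NeZero N] (lam : Fin n → Fin d → ℝ) :
    Matrix ((Fin d → ZMod N) → Fin (n + 1)) ((Fin d → ZMod N) → Fin (n + 1)) ℂ :=
  ∑ e : (Fin d → ZMod N) × Fin d, ∑ e' : (Fin d → ZMod N) × Fin d,
    if (epT e ∩ epT e').card = 0 then hedge lam e * hedge lam e' else 0

/-! ### Subgraphs of `ℤ^d` and the box on a stick `C_m`. -/

/-- The neighbor `x + e_k` of the site `x ∈ ℤ^d`. -/
def nbrZ {d : ℕ} (x : Fin d → ℤ) (k : Fin d) : Fin d → ℤ :=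
  fun j => if j = k then x j + 1 else x j

/-- The point `l·e_1 ∈ ℤ^d`. -/
def stickPt (d : ℕ) (l : ℕ) : Fin d → ℤ := fun k => if (k : ℕ) = 0 then (l : ℤ) else 0

/-- The stick `S = {0, e_1, …, (n−1)e_1} ⊂ ℤ^d`. -/
def stickF (d n : ℕ) : Finset (Fin d → ℤ) := (Finset.range n).image (stickPt d)

/-- The box `B_m = {Σ a_k e_k : n ≤ a_1 ≤ m+n, 0 ≤ a_k ≤ m for k ≥ 2} ⊂ ℤ^d`. -/
def boxF (d n m : ℕ) : Finset (Fin d → ℤ) :=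
  Finset.image
    (fun a : Fin d → Fin (m + 1) => fun k : Fin d =>
      if (k : ℕ) = 0 then (n : ℤ) + (a k : ℤ) else (a k : ℤ))
    Finset.univ

/-- The box on a stick `C_m = S ∪ B_m ⊂ ℤ^d`. -/
def CmF (d n m : ℕ) : Finset (Fin d → ℤ) := stickF d n ∪ boxF d n m

/-- The PVBS subsystem Hamiltonian `H_G = Σ_{e ∈ E_G} h_e` of a finite subgraph
`G ⊂ ℤ^d` (with one interaction term for every oriented lattice edge with both endpoints
in `G`), acting on `⊗_{x ∈ G} ℂ^{n+1}`. -/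
noncomputable def HG {d : ℕ} (n : ℕ) (lam : Fin n → Fin d → ℝ) (G : Finset (Fin d → ℤ)) :
    Matrix ({x // x ∈ G} → Fin (n + 1)) ({x // x ∈ G} → Fin (n + 1)) ℂ :=
  ∑ x : {x // x ∈ G}, ∑ k : Fin d,
    if h : nbrZ (x : Fin d → ℤ) k ∈ G then
      embed x ⟨nbrZ (x : Fin d → ℤ) k, h⟩ (hloc fun i => lam i k)
    else 0

/-- The PVBS Hamiltonian `H_{C_m}` of the box on a stick. -/
noncomputable def HCm (d n m : ℕ) (lam : Fin n → Fin d → ℝ) :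
    Matrix ({x // x ∈ CmF d n m} → Fin (n + 1)) ({x // x ∈ CmF d n m} → Fin (n + 1)) ℂ :=
  HG n lam (CmF d n m)

/-- The reference (`δ = 0`) Hamiltonian `H̃_G = Σ_{e ∈ E_G} h̃_e` of a finite subgraph
`G ⊂ ℤ^d`. -/
noncomputable def HtildeG {d : ℕ} (n : ℕ) (G : Finset (Fin d → ℤ)) :
    Matrix ({x // x ∈ G} → Fin (n + 1)) ({x // x ∈ G} → Fin (n + 1)) ℂ :=
  ∑ x : {x // x ∈ G}, ∑ k : Fin d,
    if h : nbrZ (x : Fin d → ℤ) k ∈ G then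
      embed x ⟨nbrZ (x : Fin d → ℤ) k, h⟩ (htilde n)
    else 0

/-! ### Translates `x + C_m` inside the torus. -/

/-- The interaction term of the lattice edge `(c, c + e_k)` of `ℤ^d`, translated by
`x` into the torus `(ZMod N)^d` (reducing coordinates mod `N`). -/
noncomputable def hedgeTrans {n d N : ℕ} [NeZero N] (lam : Fin n → Fin d → ℝ)
    (x : Fin d → ZMod N) (c : Fin d → ℤ) (k : Fin d) :
    Matrix ((Fin d → ZMod N) → Fin (n + 1)) ((Fin d → ZMod N) → Fin (n + 1)) ℂ :=
  embed (fun j => x j + (c j : ZMod N)) (fun j => x j + ((nbrZ c k) j : ZMod N))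
    (hloc fun i => lam i k)

/-- The subsystem Hamiltonian `H_{x+C_m}` of the translate `x + C_m ⊂ Λ_L`, acting on the
full torus Hilbert space. -/
noncomputable def HtransCm (n d N m : ℕ) [NeZero N] (lam : Fin n → Fin d → ℝ)
    (x : Fin d → ZMod N) :
    Matrix ((Fin d → ZMod N) → Fin (n + 1)) ((Fin d → ZMod N) → Fin (n + 1)) ℂ :=
  ∑ c : {y // y ∈ CmF d n m}, ∑ k : Fin d,
    if nbrZ (c : Fin d → ℤ) k ∈ CmF d n m then hedgeTrans lam x (c : Fin d → ℤ) k else 0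

/-- The (unordered) endpoints of the oriented lattice edge `(c, c + e_k)` of `ℤ^d`. -/
def epZ {d : ℕ} (c : Fin d → ℤ) (k : Fin d) : Finset (Fin d → ℤ) := {c, nbrZ c k}

/-- `Q_{x+C_m}`: the sum of the anticommutators `{h_e, h_{e'}}` over (unordered) pairs of
edges of `x + C_m` sharing exactly one vertex, written as a sum of products over ordered
pairs. -/
noncomputable def QtransCm (n d N m : ℕ) [NeZero N] (lam : Fin n → Fin d → ℝ)
    (x : Fin d → ZMod N) :
    Matrix ((Fin d → ZMod N) → Fin (n + 1)) ((Fin d → ZMod N) → Fin (n + 1)) ℂ :=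
  ∑ c : {y // y ∈ CmF d n m}, ∑ k : Fin d,
    ∑ c' : {y // y ∈ CmF d n m}, ∑ k' : Fin d,
      if nbrZ (c : Fin d → ℤ) k ∈ CmF d n m ∧ nbrZ (c' : Fin d → ℤ) k' ∈ CmF d n m ∧
          (epZ (c : Fin d → ℤ) k ∩ epZ (c' : Fin d → ℤ) k').card = 1 then
        hedgeTrans lam x (c : Fin d → ℤ) k * hedgeTrans lam x (c' : Fin d → ℤ) k'
      else 0

/-- `R_{x+C_m}`: the sum of the anticommutators `{h_e, h_{e'}}` over (unordered) pairs of
vertex-disjoint edges of `x + C_m`, written as a sum of products over ordered pairs. -/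
noncomputable def RtransCm (n d N m : ℕ) [NeZero N] (lam : Fin n → Fin d → ℝ)
    (x : Fin d → ZMod N) :
    Matrix ((Fin d → ZMod N) → Fin (n + 1)) ((Fin d → ZMod N) → Fin (n + 1)) ℂ :=
  ∑ c : {y // y ∈ CmF d n m}, ∑ k : Fin d,
    ∑ c' : {y // y ∈ CmF d n m}, ∑ k' : Fin d,
      if nbrZ (c : Fin d → ℤ) k ∈ CmF d n m ∧ nbrZ (c' : Fin d → ℤ) k' ∈ CmF d n m ∧
          (epZ (c : Fin d → ℤ) k ∩ epZ (c' : Fin d → ℤ) k').card = 0 then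
        hedgeTrans lam x (c : Fin d → ℤ) k * hedgeTrans lam x (c' : Fin d → ℤ) k'
      else 0

/-- The particle number operator `N_i` of species `1 ≤ i ≤ n` on `⊗_{x ∈ G} ℂ^{n+1}`:
diagonal in the product basis, counting the sites carrying the label `i`. -/
noncomputable def Nop {d : ℕ} {n : ℕ} (G : Finset (Fin d → ℤ)) (i : Fin n) :
    Matrix ({x // x ∈ G} → Fin (n + 1)) ({x // x ∈ G} → Fin (n + 1)) ℂ :=
  Matrix.diagonal fun σ => ((Finset.univ.filter fun x => σ x = i.succ).card : ℂ)

/-- The product basis vector of `⊗_{x} ℂ^{n+1}` labelled by the configuration `σ`. -/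
def bvec {I : Type*} [DecidableEq I] (σ : I) : I → ℂ := fun τ => if τ = σ then 1 else 0


/-! ### Auxiliary lemmas for `ground_state_particle_sectors` -/

lemma projOnto_ketPair_diag {n : ℕ} (a b : Fin (n+1)) (p : Fin (n+1) × Fin (n+1)) :
    projOnto (ketPair a b) p p = if p = (a, b) then 1 else 0 := by
  have hsum : (∑ q, Complex.normSq (ketPair a b q) : ℝ) = 1 := by
    simp [ketPair, apply_ite Complex.normSq]
  rw [projOnto, hsum]
  by_cases h : p = (a, b) <;> simp [ketPair, h]

/-- natural-number count of reference projectors hitting the pair `(a,b)` -/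
def cnt {n : ℕ} (a b : Fin (n+1)) : ℕ :=
  (∑ i : Fin n, if (a, b) = ((0 : Fin (n+1)), i.succ) then 1 else 0) +
    ∑ i : Fin n, ∑ j : Fin n, if i ≤ j ∧ (a, b) = (i.succ, j.succ) then 1 else 0

lemma htilde_diag {n : ℕ} (a b : Fin (n+1)) :
    htilde n (a, b) (a, b) = (cnt a b : ℂ) := by
  rw [htilde, cnt, Matrix.add_apply, Matrix.sum_apply, Matrix.sum_apply]
  push_cast
  congr 1
  · exact Finset.sum_congr rfl fun i _ => by rw [projOnto_ketPair_diag]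
  · refine Finset.sum_congr rfl fun i _ => ?_
    rw [Matrix.sum_apply]
    refine Finset.sum_congr rfl fun j _ => ?_
    by_cases h : i ≤ j <;> by_cases h2 : (a, b) = (i.succ, j.succ) <;>
      simp [h, h2, projOnto_ketPair_diag]

lemma cnt_eq_zero {n : ℕ} {a b : Fin (n+1)} (h : cnt a b = 0) (hb : b ≠ 0) :
    (b : ℕ) < (a : ℕ) := by
  obtain ⟨j, rfl⟩ : ∃ j : Fin n, b = j.succ := ⟨b.pred hb, (Fin.succ_pred b hb).symm⟩
  rw [cnt, Nat.add_eq_zero] at h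
  have h1 := Finset.sum_eq_zero_iff.mp h.1 j (Finset.mem_univ j)
  have ha : a ≠ 0 := by
    intro rfl'
    simp [rfl'] at h1
  obtain ⟨i, rfl⟩ : ∃ i : Fin n, a = i.succ := ⟨a.pred ha, (Fin.succ_pred a ha).symm⟩
  have h2 := Finset.sum_eq_zero_iff.mp h.2 i (Finset.mem_univ i)
  have h3 := Finset.sum_eq_zero_iff.mp h2 j (Finset.mem_univ j)
  have hnle : ¬ i ≤ j := by
    intro hij
    simp [hij] at h3
  have hji : j < i := lt_of_not_ge hnle
  simp only [Fin.val_succ]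
  exact Nat.succ_lt_succ (Fin.lt_def.mp hji)

lemma embed_diag {n : ℕ} {V : Type*} [Fintype V] [DecidableEq V] (x y : V)
    (h2 : Matrix (Fin (n + 1) × Fin (n + 1)) (Fin (n + 1) × Fin (n + 1)) ℂ)
    (σ : V → Fin (n+1)) : embed x y h2 σ σ = h2 (σ x, σ y) (σ x, σ y) := by
  simp [embed]

lemma edge_cnt_zero {d n : ℕ} {G : Finset (Fin d → ℤ)} {σ : {x // x ∈ G} → Fin (n + 1)}
    (hker : (HtildeG n G).mulVec (bvec σ) = 0)
    (x : {x // x ∈ G}) (k : Fin d) (h : nbrZ (x : Fin d → ℤ) k ∈ G) :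
    cnt (σ x) (σ ⟨nbrZ (x : Fin d → ℤ) k, h⟩) = 0 := by
  have h0 : HtildeG n G σ σ = 0 := by
    have := congrFun hker σ
    rwa [Matrix.mulVec, dotProduct, Finset.sum_eq_single σ
      (fun ρ _ hρ => by simp [bvec, hρ]) (by simp), bvec, if_pos rfl, mul_one,
      Pi.zero_apply] at this
  have hdiag : HtildeG n G σ σ =
      ((∑ x : {x // x ∈ G}, ∑ k : Fin d, if h : nbrZ (x : Fin d → ℤ) k ∈ G then
        cnt (σ x) (σ ⟨nbrZ (x : Fin d → ℤ) k, h⟩) else 0 : ℕ) : ℂ) := by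
    rw [HtildeG, Matrix.sum_apply]
    push_cast
    refine Finset.sum_congr rfl fun y _ => ?_
    rw [Matrix.sum_apply]
    refine Finset.sum_congr rfl fun k' _ => ?_
    by_cases hy : nbrZ (y : Fin d → ℤ) k' ∈ G
    · rw [dif_pos hy, dif_pos hy, embed_diag, htilde_diag]
    · simp [hy]
  rw [hdiag] at h0
  have hsum : (∑ x : {x // x ∈ G}, ∑ k : Fin d, if h : nbrZ (x : Fin d → ℤ) k ∈ G then
      cnt (σ x) (σ ⟨nbrZ (x : Fin d → ℤ) k, h⟩) else 0) = 0 := by exact_mod_cast h0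
  have h1 := Finset.sum_eq_zero_iff.mp hsum x (Finset.mem_univ x)
  have h2 := Finset.sum_eq_zero_iff.mp h1 k (Finset.mem_univ k)
  rwa [dif_pos h] at h2

/-- sum of (nonnegative) coordinates -/
def coordSum {d : ℕ} (z : Fin d → ℤ) : ℕ := ∑ k, (z k).toNat

lemma mem_stickF_iff {d n : ℕ} {z : Fin d → ℤ} :
    z ∈ stickF d n ↔ ∃ l, l < n ∧ z = stickPt d l := by
  simp [stickF, eq_comm, Finset.mem_image]

lemma mem_boxF_iff {d n m : ℕ} {z : Fin d → ℤ} :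
    z ∈ boxF d n m ↔ ∀ k : Fin d,
      ((k : ℕ) = 0 → (n : ℤ) ≤ z k ∧ z k ≤ n + m) ∧
      ((k : ℕ) ≠ 0 → 0 ≤ z k ∧ z k ≤ m) := by
  constructor
  · intro hz
    rw [boxF, Finset.mem_image] at hz
    obtain ⟨a, -, rfl⟩ := hz
    intro k
    have h1 : ((a k : ℕ) : ℤ) ≤ m := by exact_mod_cast Nat.lt_succ_iff.mp (a k).isLt
    have h2 : (0 : ℤ) ≤ ((a k : ℕ) : ℤ) := Int.ofNat_nonneg _
    by_cases hk : (k : ℕ) = 0 <;> simp [hk] <;> omega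
  · intro h
    rw [boxF, Finset.mem_image]
    refine ⟨fun k => ⟨(if (k : ℕ) = 0 then z k - n else z k).toNat, ?_⟩, Finset.mem_univ _, ?_⟩
    · have h1 := (h k).1
      have h2 := (h k).2
      by_cases hk : (k : ℕ) = 0 <;> simp only [hk, if_true, if_false] <;> omega
    · funext k
      have h1 := (h k).1
      have h2 := (h k).2
      by_cases hk : (k : ℕ) = 0 <;> simp only [hk, if_true, if_false, ite_true, ite_false] <;>
        omega

lemma mem_CmF_iff {d n m : ℕ} {z : Fin d → ℤ} :
    z ∈ CmF d n m ↔ (∃ l, l < n ∧ z = stickPt d l) ∨ z ∈ boxF d n m := by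
  rw [CmF, Finset.mem_union, mem_stickF_iff]

lemma coord_nonneg {d n m : ℕ} {z : Fin d → ℤ} (hz : z ∈ CmF d n m) (k : Fin d) :
    0 ≤ z k := by
  rcases mem_CmF_iff.mp hz with ⟨l, -, rfl⟩ | hb
  · unfold stickPt; split <;> omega
  · have h := mem_boxF_iff.mp hb k
    by_cases hk : (k : ℕ) = 0
    · have := h.1 hk; omega
    · exact (h.2 hk).1

lemma coordSum_stickPt {d : ℕ} (hd : 0 < d) (l : ℕ) : coordSum (stickPt d l) = l := by
  unfold coordSum stickPt
  have : ∀ k : Fin d, ((if (k : ℕ) = 0 then (l : ℤ) else 0)).toNat =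
      if k = ⟨0, hd⟩ then l else 0 := by
    intro k
    by_cases hk : (k : ℕ) = 0
    · rw [if_pos hk, if_pos (Fin.ext hk), Int.toNat_natCast]
    · rw [if_neg hk, if_neg (fun h => hk (by rw [h]))]
      rfl
  simp only [this, Finset.sum_ite_eq', Finset.mem_univ, if_true]

lemma coordSum_box_ge {d n m : ℕ} (hd : 0 < d) {z : Fin d → ℤ} (hz : z ∈ boxF d n m) :
    n ≤ coordSum z := by
  have h := (mem_boxF_iff.mp hz ⟨0, hd⟩).1 rfl
  calc (n : ℕ) ≤ (z ⟨0, hd⟩).toNat := by omega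
    _ ≤ coordSum z := Finset.single_le_sum (f := fun k => (z k).toNat)
        (fun k _ => Nat.zero_le _) (Finset.mem_univ _)

lemma coordSum_dec {d : ℕ} (z : Fin d → ℤ) (k : Fin d) (hpos : ∀ j, 0 ≤ z j)
    (h1 : 1 ≤ z k) :
    coordSum (fun j => if j = k then z j - 1 else z j) + 1 = coordSum z := by
  unfold coordSum
  rw [← Finset.sum_erase_add _ _ (Finset.mem_univ k),
    ← Finset.sum_erase_add _ (fun j => (z j).toNat) (Finset.mem_univ k)]
  have he : ∑ j ∈ Finset.univ.erase k, ((if j = k then z j - 1 else z j)).toNat =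
      ∑ j ∈ Finset.univ.erase k, (z j).toNat := by
    refine Finset.sum_congr rfl fun j hj => ?_
    rw [if_neg (Finset.ne_of_mem_erase hj)]
  rw [he]
  simp only [if_true, eq_self_iff_true]
  omega

lemma nbrZ_dec {d : ℕ} (z : Fin d → ℤ) (k : Fin d) :
    nbrZ (fun j => if j = k then z j - 1 else z j) k = z := by
  funext j
  unfold nbrZ
  by_cases hj : j = k <;> simp [hj]

lemma stickPt_mem_CmF {d n m : ℕ} {l : ℕ} (hl : l < n) : stickPt d l ∈ CmF d n m :=
  mem_CmF_iff.mpr (Or.inl ⟨l, hl, rfl⟩)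

lemma stickPt_apply_zero {d : ℕ} (hd : 0 < d) (l : ℕ) :
    stickPt d l ⟨0, hd⟩ = (l : ℤ) := if_pos rfl

lemma stickPt_mem_CmF_iff {d n m : ℕ} (hd : 0 < d) {l : ℕ} :
    stickPt d l ∈ CmF d n m ↔ l ≤ n + m := by
  constructor
  · intro h
    rcases mem_CmF_iff.mp h with ⟨l', hl', he⟩ | hb
    · have hv := congrFun he ⟨0, hd⟩
      rw [stickPt_apply_zero hd, stickPt_apply_zero hd] at hv
      omega
    · have hv := (mem_boxF_iff.mp hb ⟨0, hd⟩).1 rfl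
      rw [stickPt_apply_zero hd] at hv
      omega
  · intro h
    rcases Nat.lt_or_ge l n with hl | hl
    · exact stickPt_mem_CmF hl
    · refine mem_CmF_iff.mpr (Or.inr (mem_boxF_iff.mpr fun k => ?_))
      unfold stickPt
      constructor
      · intro hk; rw [if_pos hk]; omega
      · intro hk; rw [if_neg hk]; omega

lemma exists_pred {d n m : ℕ} (hd : 0 < d) (hn : 1 ≤ n) {z : Fin d → ℤ}
    (hz : z ∈ CmF d n m) (hpos : 0 < coordSum z) :
    ∃ k : Fin d, 1 ≤ z k ∧ (fun j => if j = k then z j - 1 else z j) ∈ CmF d n m := by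
  rcases mem_CmF_iff.mp hz with ⟨l, hl, rfl⟩ | hb
  · rw [coordSum_stickPt hd] at hpos
    refine ⟨⟨0, hd⟩, by simp [stickPt]; omega, ?_⟩
    have heq : (fun j => if j = (⟨0, hd⟩ : Fin d) then stickPt d l j - 1 else stickPt d l j) =
        stickPt d (l - 1) := by
      funext j
      by_cases hj : (j : ℕ) = 0
      · rw [if_pos (Fin.ext hj)]
        unfold stickPt
        rw [if_pos hj, if_pos hj]
        omega
      · rw [if_neg (fun h => hj (by rw [h]))]
        unfold stickPt
        rw [if_neg hj, if_neg hj]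
    rw [heq]
    exact stickPt_mem_CmF (by omega)
  · have hb' := mem_boxF_iff.mp hb
    by_cases hk : ∃ k : Fin d, (k : ℕ) ≠ 0 ∧ 1 ≤ z k
    · obtain ⟨k, hk0, hk1⟩ := hk
      refine ⟨k, hk1, mem_CmF_iff.mpr (Or.inr ?_)⟩
      rw [mem_boxF_iff]
      intro j
      have h1 := hb' j
      by_cases hj : j = k
      · subst hj
        constructor
        · intro h; exact absurd h hk0
        · intro h; have := h1.2 h; simp only [if_pos rfl]; omega
      · rw [if_neg hj]; exact h1
    · push_neg at hk
      by_cases h0 : (n : ℤ) < z ⟨0, hd⟩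
      · refine ⟨⟨0, hd⟩, by have := (hb' ⟨0, hd⟩).1 rfl; omega,
          mem_CmF_iff.mpr (Or.inr ?_)⟩
        rw [mem_boxF_iff]
        intro j
        have h1 := hb' j
        by_cases hj : j = ⟨0, hd⟩
        · subst hj
          refine ⟨fun _ => ?_, fun h => absurd rfl h⟩
          have := (h1.1 rfl)
          simp only [if_pos rfl]
          omega
        · rw [if_neg hj]; exact h1
      · refine ⟨⟨0, hd⟩, by have := (hb' ⟨0, hd⟩).1 rfl; omega, ?_⟩
        have hz0 : z ⟨0, hd⟩ = n := by have := (hb' ⟨0, hd⟩).1 rfl; omega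
        have heq : (fun j => if j = (⟨0, hd⟩ : Fin d) then z j - 1 else z j) =
            stickPt d (n - 1) := by
          funext j
          by_cases hj : (j : ℕ) = 0
          · have hj' : j = ⟨0, hd⟩ := Fin.ext hj
            rw [if_pos hj']
            unfold stickPt
            rw [if_pos hj, hj', hz0]
            omega
          · have hj' : j ≠ ⟨0, hd⟩ := fun h => hj (by rw [h])
            rw [if_neg hj']
            unfold stickPt
            rw [if_neg hj]
            have hz1 := hk j hj
            have hz2 := (hb' j).2 hj
            omega
        rw [heq]
        exact stickPt_mem_CmF (by omega)

lemma fin_val_pos {N : ℕ} {a : Fin (N+1)} (h : a ≠ 0) : 0 < (a : ℕ) := by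
  rcases Nat.eq_zero_or_pos (a : ℕ) with h0 | h0
  · exact absurd (Fin.ext h0) h
  · exact h0

lemma fin_ne_zero_of_val {N : ℕ} {a : Fin (N+1)} (h : (a : ℕ) ≠ 0) : a ≠ 0 :=
  fun h0 => h (by rw [h0]; rfl)

section Main

variable {d n m : ℕ} {σ : {x // x ∈ CmF d n m} → Fin (n + 1)}

lemma edge_step (hker : (HtildeG n (CmF d n m)).mulVec (bvec σ) = 0)
    {w : Fin d → ℤ} (hw : w ∈ CmF d n m) (k : Fin d) (h : nbrZ w k ∈ CmF d n m)
    (hnz : σ ⟨nbrZ w k, h⟩ ≠ 0) :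
    (σ ⟨nbrZ w k, h⟩ : ℕ) < (σ ⟨w, hw⟩ : ℕ) :=
  cnt_eq_zero (edge_cnt_zero hker ⟨w, hw⟩ k h) hnz

lemma val_bound (hd : 0 < d) (hn : 1 ≤ n)
    (hker : (HtildeG n (CmF d n m)).mulVec (bvec σ) = 0) :
    ∀ s : ℕ, ∀ (z : Fin d → ℤ) (hz : z ∈ CmF d n m), coordSum z = s →
      σ ⟨z, hz⟩ ≠ 0 → (σ ⟨z, hz⟩ : ℕ) + coordSum z ≤ n := by
  intro s
  induction s using Nat.strong_induction_on with
  | _ s ih =>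
    intro z hz hs hnz
    rcases Nat.eq_zero_or_pos s with h0 | hp
    · have := Fin.is_le (σ ⟨z, hz⟩)
      omega
    · obtain ⟨k, hk1, hkm⟩ := exists_pred hd hn hz (hs ▸ hp)
      have hnbr : nbrZ (fun j => if j = k then z j - 1 else z j) k = z := nbrZ_dec z k
      have hcs : coordSum (fun j => if j = k then z j - 1 else z j) + 1 = coordSum z :=
        coordSum_dec z k (coord_nonneg hz) hk1
      have hz' : nbrZ (fun j => if j = k then z j - 1 else z j) k ∈ CmF d n m := by
        rw [hnbr]; exact hz
      have heq : (⟨z, hz⟩ : {x // x ∈ CmF d n m}) = ⟨_, hz'⟩ := Subtype.ext hnbr.symm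
      rw [heq] at hnz ⊢
      have hlt := edge_step hker hkm k hz' hnz
      have hvp := fin_val_pos hnz
      have hwnz : σ ⟨_, hkm⟩ ≠ 0 := fin_ne_zero_of_val (by omega)
      have hih := ih (coordSum (fun j => if j = k then z j - 1 else z j)) (by omega)
        _ hkm rfl hwnz
      omega

lemma stick_nbr {d : ℕ} (hd : 0 < d) (a : ℕ) :
    nbrZ (stickPt d a) ⟨0, hd⟩ = stickPt d (a + 1) := by
  funext j
  unfold nbrZ stickPt
  by_cases hj : (j : ℕ) = 0
  · rw [if_pos (Fin.ext hj), if_pos hj, if_pos hj]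
    push_cast
    ring
  · rw [if_neg (fun h => hj (by rw [h])), if_neg hj, if_neg hj]

lemma stick_mono (hd : 0 < d) (hn : 1 ≤ n)
    (hker : (HtildeG n (CmF d n m)).mulVec (bvec σ) = 0) :
    ∀ (t a : ℕ) (h1 : stickPt d a ∈ CmF d n m) (h2 : stickPt d (a + t) ∈ CmF d n m),
      σ ⟨stickPt d (a + t), h2⟩ ≠ 0 →
      (σ ⟨stickPt d (a + t), h2⟩ : ℕ) + t ≤ (σ ⟨stickPt d a, h1⟩ : ℕ) := by
  intro t
  induction t with
  | zero => intro a h1 h2 _; simp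
  | succ t iht =>
    intro a h1 h2 hnz
    have hmem : stickPt d (a + t) ∈ CmF d n m := by
      rw [stickPt_mem_CmF_iff hd] at h2 ⊢
      omega
    have hedge : nbrZ (stickPt d (a + t)) ⟨0, hd⟩ = stickPt d (a + t + 1) := stick_nbr hd _
    have h2' : nbrZ (stickPt d (a + t)) ⟨0, hd⟩ ∈ CmF d n m := by
      rw [hedge]; exact h2
    have heq : (⟨stickPt d (a + (t + 1)), h2⟩ : {x // x ∈ CmF d n m}) = ⟨_, h2'⟩ :=
      Subtype.ext hedge.symm
    rw [heq] at hnz ⊢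
    have hlt := edge_step hker hmem _ h2' hnz
    have hvp := fin_val_pos hnz
    have hwnz : σ ⟨stickPt d (a + t), hmem⟩ ≠ 0 := fin_ne_zero_of_val (by omega)
    have hih := iht a h1 hmem hwnz
    omega

lemma sigma_inj (hd : 0 < d) (hn : 1 ≤ n)
    (hker : (HtildeG n (CmF d n m)).mulVec (bvec σ) = 0)
    (x y : {x // x ∈ CmF d n m}) (hxy : σ x = σ y) (hnz : σ x ≠ 0) : x = y := by
  -- both sites carry a particle, so both lie on the stick
  have hbx : (σ x : ℕ) + coordSum x.1 ≤ n :=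
    val_bound hd hn hker _ x.1 x.2 rfl hnz
  have hby : (σ y : ℕ) + coordSum y.1 ≤ n :=
    val_bound hd hn hker _ y.1 y.2 rfl (hxy ▸ hnz)
  have hvp := fin_val_pos hnz
  have hsx : ∃ l, l < n ∧ x.1 = stickPt d l := by
    rcases mem_CmF_iff.mp x.2 with h | h
    · exact h
    · have := coordSum_box_ge hd h; omega
  have hsy : ∃ l, l < n ∧ y.1 = stickPt d l := by
    rcases mem_CmF_iff.mp y.2 with h | h
    · exact h
    · have := coordSum_box_ge hd h; omega
  obtain ⟨a, ha, hxa⟩ := hsx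
  obtain ⟨b, hb, hyb⟩ := hsy
  have hmem1 : stickPt d a ∈ CmF d n m := hxa ▸ x.2
  have hmem1' : stickPt d b ∈ CmF d n m := hyb ▸ y.2
  have hxv : σ x = σ ⟨stickPt d a, hmem1⟩ := by congr 1; exact Subtype.ext hxa
  have hyv : σ y = σ ⟨stickPt d b, hmem1'⟩ := by congr 1; exact Subtype.ext hyb
  rcases lt_trichotomy a b with hab | hab | hab
  · exfalso
    have hba : b = a + (b - a) := by omega
    have hmem2 : stickPt d (a + (b - a)) ∈ CmF d n m := by rw [← hba]; exact hmem1'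
    have hyv2 : σ y = σ ⟨stickPt d (a + (b - a)), hmem2⟩ := by
      congr 1
      exact Subtype.ext (hyb.trans (show stickPt d b = stickPt d (a + (b - a)) by rw [← hba]))
    have hmono := stick_mono hd hn hker (b - a) a hmem1 hmem2
      (by rw [← hyv2, ← hxy]; exact hnz)
    rw [← hyv2, ← hxv, ← hxy] at hmono
    omega
  · subst hab
    exact Subtype.ext (hxa.trans hyb.symm)
  · exfalso
    have hba : a = b + (a - b) := by omega
    have hmem2 : stickPt d (b + (a - b)) ∈ CmF d n m := by rw [← hba]; exact hmem1
    have hxv2 : σ x = σ ⟨stickPt d (b + (a - b)), hmem2⟩ := by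
      congr 1
      exact Subtype.ext (hxa.trans (show stickPt d a = stickPt d (b + (a - b)) by rw [← hba]))
    have hmono := stick_mono hd hn hker (a - b) b hmem1' hmem2
      (by rw [← hxv2]; exact hnz)
    rw [← hxv2, ← hyv, hxy] at hmono
    omega

end Main

/-- For each product-basis ground state `b ∈ ker H̃_{C_m}` there is a unique vector
`(ν_1, …, ν_n) ∈ {0,1}^n` with `b ∈ P(ν_1, …, ν_n)`: each species occurs at most once. -/
theorem ground_state_particle_sectors (d n m : ℕ) (hd : 2 ≤ d) (hn : 1 ≤ n) (hm : 4 ≤ m)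
    (σ : {x // x ∈ CmF d n m} → Fin (n + 1))
    (hker : (HtildeG n (CmF d n m)).mulVec (bvec σ) = 0) :
    ∃! ν : Fin n → ℕ, (∀ i, ν i ≤ 1) ∧
      ∀ i : Fin n, (Nop (CmF d n m) i).mulVec (bvec σ) = (ν i : ℂ) • bvec σ := by
  have hd' : 0 < d := by omega
  have hEigen : ∀ i : Fin n, (Nop (CmF d n m) i).mulVec (bvec σ) =
      ((((Finset.univ.filter fun x : {x // x ∈ CmF d n m} => σ x = i.succ).card : ℕ) : ℂ))
        • bvec σ := by
    intro i
    funext τ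
    by_cases hτ : τ = σ <;> simp [Nop, Matrix.mulVec_diagonal, bvec, hτ]
  refine ⟨fun i => (Finset.univ.filter fun x : {x // x ∈ CmF d n m} => σ x = i.succ).card,
    ⟨fun i => ?_, hEigen⟩, ?_⟩
  · refine Finset.card_le_one.mpr fun a ha b hb => ?_
    rw [Finset.mem_filter] at ha hb
    exact sigma_inj hd' hn hker a b (ha.2.trans hb.2.symm) (ha.2 ▸ Fin.succ_ne_zero i)
  · rintro ν' ⟨-, h2'⟩
    funext i
    have hc := congrFun ((h2' i).symm.trans (hEigen i)) σ
    simp only [Pi.smul_apply, smul_eq_mul, bvec, if_pos rfl, if_true, mul_one] at hc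
    exact_mod_cast hc

end PVBS
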